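/- Let f : ℝ^d → ℝ be three times continuously differentiable, let B : ℝ^d → ℝ^{d×d} take symmetric values, and suppose there exist 0 < μ ≤ L with μ·I ⪯ ∇²f(x)B(x)∇²f(x) ⪯ L·I for all x. Set γ = 1/μ, ε = 1, and A = (μ+L)/(2 + (μ+L)εγ). Let (x(t), p(t)) be a differentiable solution on [0,∞) of the PDD ODE system ṗ = A∇f(x) − εA p, ẋ = −C(x)(p + γ(A∇f(x) − εA p)), where C(x) = B(x)∇²f(x). Then for all t ≥ 0: I(x(t), p(t)) ≤ I(x(0), p(0)) · exp(−μ t), where I(x,p) = ½(‖p‖² + ‖∇f(x)‖²). -/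

import Mathlib

open Matrix

private theorem dot_deriv_aux {d : ℕ} {u v : ℝ → Fin d → ℝ} {u' v' : Fin d → ℝ} {s : Set ℝ} {t : ℝ}
    (hu : HasDerivWithinAt u u' s t) (hv : HasDerivWithinAt v v' s t) :
    HasDerivWithinAt (fun τ => u τ ⬝ᵥ v τ) (u' ⬝ᵥ v t + u t ⬝ᵥ v') s t := by
  have h : ∀ i ∈ Finset.univ, HasDerivWithinAt (fun τ => u τ i * v τ i)
      (u' i * v t i + u t i * v' i) s t := fun i _ =>
    (hasDerivWithinAt_pi.1 hu i).mul (hasDerivWithinAt_pi.1 hv i)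
  have := HasDerivWithinAt.fun_sum h
  simpa [dotProduct, Finset.sum_add_distrib] using this

private theorem arith_aux (μ L A P G X Y Z : ℝ) (hμ : 0 < μ) (hμL : μ ≤ L)
    (hA' : A * (3*μ+L) = μ*(μ+L))
    (h1 : μ * G ≤ Z)
    (h2 : μ*(G+2*X+P) - L*(G-2*X+P) ≤ 4*Y) :
    A*X - A*P - (Y + (1/μ)*(A*Z - A*Y)) ≤ -μ * ((P+G)/2) := by
  have hD : (0:ℝ) < 3*μ+L := by linarith
  rw [← mul_le_mul_iff_of_pos_right (mul_pos hμ hD)]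
  have expand : (A*X - A*P - (Y + (1/μ)*(A*Z - A*Y))) * (μ*(3*μ+L)) =
      μ*(A*(3*μ+L))*X - μ*(A*(3*μ+L))*P - μ*(3*μ+L)*Y - (A*(3*μ+L))*Z + (A*(3*μ+L))*Y := by
    field_simp
    ring
  rw [expand, hA']
  nlinarith [mul_le_mul_of_nonneg_left h1 (by nlinarith : (0:ℝ) ≤ μ*(μ+L)),
    mul_le_mul_of_nonneg_left h2 (by nlinarith : (0:ℝ) ≤ μ*μ/2)]

/-- Continuous-time Lyapunov decay with the tuned parameters `γ = 1/μ`, `ε = 1`,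
`A = (μ+L)/(2 + (μ+L)εγ)`: for `μ·I ⪯ ∇²f(x)B(x)∇²f(x) ⪯ L·I` (0 < μ ≤ L) and a differentiable
solution on `[0,∞)` of the PDD ODE, `I(x(t),p(t)) ≤ I(x(0),p(0)) exp(−μt)` where
`I(x,p) = ½(‖p‖² + ‖∇f(x)‖²)`. -/
theorem stmt_10 (d : ℕ) (f : (Fin d → ℝ) → ℝ)
    (gradf : (Fin d → ℝ) → Fin d → ℝ)
    (hessf B : (Fin d → ℝ) → Matrix (Fin d) (Fin d) ℝ)
    (hf : ContDiff ℝ 3 f)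
    (hgrad : ∀ x y, fderiv ℝ f x y = gradf x ⬝ᵥ y)
    (hhess : ∀ x y, fderiv ℝ gradf x y = hessf x *ᵥ y)
    (hBsymm : ∀ x, (B x).IsSymm)
    (μ L : ℝ) (hμ : 0 < μ) (hμL : μ ≤ L)
    (hlow : ∀ x v, μ * (v ⬝ᵥ v) ≤ v ⬝ᵥ ((hessf x * B x * hessf x) *ᵥ v))
    (hup : ∀ x v, v ⬝ᵥ ((hessf x * B x * hessf x) *ᵥ v) ≤ L * (v ⬝ᵥ v))
    (γ ε A : ℝ) (hγ : γ = 1 / μ) (hε : ε = 1)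
    (hA : A = (μ + L) / (2 + (μ + L) * ε * γ))
    (x p : ℝ → Fin d → ℝ)
    (hx : ∀ t ∈ Set.Ici (0 : ℝ), HasDerivWithinAt x
      (-((B (x t) * hessf (x t)) *ᵥ (p t + γ • (A • gradf (x t) - (ε * A) • p t))))
      (Set.Ici 0) t)
    (hp : ∀ t ∈ Set.Ici (0 : ℝ), HasDerivWithinAt p
      (A • gradf (x t) - (ε * A) • p t) (Set.Ici 0) t) :
    ∀ t ∈ Set.Ici (0 : ℝ),
      (p t ⬝ᵥ p t + gradf (x t) ⬝ᵥ gradf (x t)) / 2 ≤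
        ((p 0 ⬝ᵥ p 0 + gradf (x 0) ⬝ᵥ gradf (x 0)) / 2) * Real.exp (-μ * t) := by
  -- gradf is differentiable with derivative given by the Hessian
  have hgrad_fun : gradf = fun x i => fderiv ℝ f x (Pi.single i 1) := by
    funext x0 i
    rw [hgrad]
    simp
  have hfd : ContDiff ℝ 2 (fderiv ℝ f) := hf.fderiv_right (by norm_num)
  have hdg : Differentiable ℝ gradf := by
    rw [hgrad_fun]
    exact differentiable_pi.2 fun i =>
      (hfd.differentiable (by norm_num)).clm_apply (differentiable_const _)
  have hHf : ∀ x0, HasFDerivAt gradf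
      (LinearMap.toContinuousLinearMap ((hessf x0).mulVecLin)) x0 := by
    intro x0
    have h1 := (hdg x0).hasFDerivAt
    have h2 : fderiv ℝ gradf x0 = LinearMap.toContinuousLinearMap ((hessf x0).mulVecLin) := by
      apply ContinuousLinearMap.ext
      intro y
      rw [hhess]
      simp
    rwa [h2] at h1
  -- the Hessian is symmetric
  have hsymm : ∀ x0, (hessf x0).IsSymm := by
    intro x0
    have hdf : Differentiable ℝ f := hf.differentiable (by norm_num)
    have hfd2 : HasFDerivAt (fderiv ℝ f) (fderiv ℝ (fderiv ℝ f) x0) x0 :=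
      (hfd.differentiable (by norm_num) x0).hasFDerivAt
    have hsec := second_derivative_symmetric (fun y => (hdf y).hasFDerivAt) hfd2
    have hrel : ∀ v w, fderiv ℝ (fderiv ℝ f) x0 v w = (hessf x0 *ᵥ v) ⬝ᵥ w := by
      intro v w
      have e1 : HasFDerivAt (fun y => fderiv ℝ f y w)
          ((ContinuousLinearMap.apply ℝ ℝ w).comp (fderiv ℝ (fderiv ℝ f) x0)) x0 :=
        (ContinuousLinearMap.apply ℝ ℝ w).hasFDerivAt.comp x0 hfd2
      have e2 : (fun y => fderiv ℝ f y w) = fun y => gradf y ⬝ᵥ w := by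
        funext y; rw [hgrad]
      let Wc : (Fin d → ℝ) →L[ℝ] ℝ := LinearMap.toContinuousLinearMap
        { toFun := fun v => v ⬝ᵥ w,
          map_add' := by intros; simp [add_dotProduct],
          map_smul' := by intros; simp [smul_dotProduct] }
      have e3 : HasFDerivAt (fun y => gradf y ⬝ᵥ w)
          (Wc.comp (LinearMap.toContinuousLinearMap ((hessf x0).mulVecLin))) x0 :=
        Wc.hasFDerivAt.comp x0 (hHf x0)
      rw [e2] at e1
      have e4 := e1.unique e3
      calc fderiv ℝ (fderiv ℝ f) x0 v w
          = ((ContinuousLinearMap.apply ℝ ℝ w).comp (fderiv ℝ (fderiv ℝ f) x0)) v := rfl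
        _ = (Wc.comp (LinearMap.toContinuousLinearMap ((hessf x0).mulVecLin))) v := by rw [e4]
        _ = (hessf x0 *ᵥ v) ⬝ᵥ w := by simp [Wc]
    rw [Matrix.IsSymm]
    ext i j
    have h5 := hsec (Pi.single j 1) (Pi.single i 1)
    rw [hrel, hrel] at h5
    simpa [Matrix.mulVec_single, dotProduct_single, Pi.single_apply] using h5.symm
  -- S = hessf * B * hessf is symmetric
  have hSsymm : ∀ x0, (hessf x0 * B x0 * hessf x0).IsSymm := by
    intro x0
    rw [Matrix.IsSymm, Matrix.transpose_mul, Matrix.transpose_mul,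
      (hsymm x0).eq, (hBsymm x0).eq, Matrix.mul_assoc]
  have hdotS : ∀ x0 (u v : Fin d → ℝ),
      u ⬝ᵥ ((hessf x0 * B x0 * hessf x0) *ᵥ v) = v ⬝ᵥ ((hessf x0 * B x0 * hessf x0) *ᵥ u) := by
    intro x0 u v
    rw [Matrix.dotProduct_mulVec, ← Matrix.mulVec_transpose, (hSsymm x0).eq, dotProduct_comm]
  -- abbreviations for the trajectory
  set g : ℝ → Fin d → ℝ := fun τ => gradf (x τ) with hg
  set xd : ℝ → Fin d → ℝ := fun τ =>
    -((B (x τ) * hessf (x τ)) *ᵥ (p τ + γ • (A • g τ - (ε * A) • p τ))) with hxd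
  set pd : ℝ → Fin d → ℝ := fun τ => A • g τ - (ε * A) • p τ with hpd
  set gd : ℝ → Fin d → ℝ := fun τ => hessf (x τ) *ᵥ xd τ with hgd
  set I : ℝ → ℝ := fun τ => (p τ ⬝ᵥ p τ + g τ ⬝ᵥ g τ) / 2 with hI
  set I' : ℝ → ℝ := fun τ => p τ ⬝ᵥ pd τ + g τ ⬝ᵥ gd τ with hI'
  -- derivative of I
  have hIderiv : ∀ τ ∈ Set.Ici (0:ℝ), HasDerivWithinAt I (I' τ) (Set.Ici 0) τ := by
    intro τ hτ
    have hg' : HasDerivWithinAt g (gd τ) (Set.Ici 0) τ := by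
      have := (hHf (x τ)).comp_hasDerivWithinAt τ (hx τ hτ)
      exact this
    have hp' := hp τ hτ
    have h1 := dot_deriv_aux hp' hp'
    have h2 := dot_deriv_aux hg' hg'
    have := (h1.add h2).div_const 2
    refine this.congr_deriv ?_
    simp only [hI', hpd, hgd, hg]
    rw [dotProduct_comm (A • gradf (x τ) - (ε * A) • p τ) (p τ), dotProduct_comm (hessf (x τ) *ᵥ xd τ) (gradf (x τ))]
    ring
  -- key differential inequality
  have hkey : ∀ τ ∈ Set.Ici (0:ℝ), I' τ ≤ -μ * I τ := by
    intro τ hτ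
    have hA' : A * (3*μ+L) = μ*(μ+L) := by
      have h3 : (3*μ+L) ≠ 0 := by nlinarith
      have h4 : 2 + (μ + L) * ε * γ = (3*μ+L)/μ := by
        rw [hε, hγ]
        field_simp
        ring
      rw [hA, h4, div_div_eq_mul_div, div_mul_cancel₀ _ h3]
      ring
    -- scalar quantities
    set P := p τ ⬝ᵥ p τ with hP
    set G := g τ ⬝ᵥ g τ with hG
    set X := p τ ⬝ᵥ g τ with hX
    set Y := g τ ⬝ᵥ ((hessf (x τ) * B (x τ) * hessf (x τ)) *ᵥ p τ) with hY
    set Z := g τ ⬝ᵥ ((hessf (x τ) * B (x τ) * hessf (x τ)) *ᵥ g τ) with hZ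
    have h1 : μ * G ≤ Z := hlow (x τ) (g τ)
    have h2 : μ*(G+2*X+P) - L*(G-2*X+P) ≤ 4*Y := by
      have hl2 := hlow (x τ) (g τ + p τ)
      have hu2 := hup (x τ) (g τ - p τ)
      have e1 : (g τ + p τ) ⬝ᵥ (g τ + p τ) = G + 2*X + P := by
        simp [dotProduct_add, add_dotProduct, hP, hG, hX, dotProduct_comm (g τ) (p τ)]
        ring
      have e2 : (g τ - p τ) ⬝ᵥ (g τ - p τ) = G - 2*X + P := by
        simp [dotProduct_sub, sub_dotProduct, hP, hG, hX, dotProduct_comm (g τ) (p τ)]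
        ring
      have e3 : (g τ + p τ) ⬝ᵥ ((hessf (x τ) * B (x τ) * hessf (x τ)) *ᵥ (g τ + p τ)) =
          Z + 2*Y + p τ ⬝ᵥ ((hessf (x τ) * B (x τ) * hessf (x τ)) *ᵥ p τ) := by
        simp [Matrix.mulVec_add, dotProduct_add, add_dotProduct, hY, hZ,
          hdotS (x τ) (p τ) (g τ)]
        ring
      have e4 : (g τ - p τ) ⬝ᵥ ((hessf (x τ) * B (x τ) * hessf (x τ)) *ᵥ (g τ - p τ)) =
          Z - 2*Y + p τ ⬝ᵥ ((hessf (x τ) * B (x τ) * hessf (x τ)) *ᵥ p τ) := by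
        simp [Matrix.mulVec_sub, dotProduct_sub, sub_dotProduct, hY, hZ,
          hdotS (x τ) (p τ) (g τ)]
        ring
      rw [e1, e3] at hl2
      rw [e2, e4] at hu2
      linarith
    -- expression for I'
    have hIexpr : I' τ = A*X - ε*A*P - (Y + γ*(A*Z - ε*A*Y)) := by
      show p τ ⬝ᵥ pd τ + g τ ⬝ᵥ gd τ = _
      have egd : gd τ = -((hessf (x τ) * B (x τ) * hessf (x τ)) *ᵥ
          (p τ + γ • (A • g τ - (ε * A) • p τ))) := by
        rw [hgd, hxd]
        simp [Matrix.mulVec_neg, Matrix.mulVec_mulVec, Matrix.mul_assoc]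
      rw [egd]
      simp only [hpd]
      simp [Matrix.mulVec_add, Matrix.mulVec_smul, Matrix.mulVec_sub, dotProduct_add,
        dotProduct_sub, dotProduct_smul, dotProduct_neg, smul_eq_mul, hP, hX, hY, hZ,
        dotProduct_comm (g τ) (p τ)]
      ring
    have hIval : I τ = (P+G)/2 := rfl
    rw [hIexpr, hε, hγ, hIval]
    have := arith_aux μ L A P G X Y Z hμ hμL hA' h1 h2
    linarith
  -- Gronwall: J = I * exp(μ t) is antitone on [0, ∞)
  set J : ℝ → ℝ := fun τ => I τ * Real.exp (μ * τ) with hJ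
  have hJderiv : ∀ τ ∈ Set.Ici (0:ℝ), HasDerivWithinAt J
      (I' τ * Real.exp (μ * τ) + I τ * (Real.exp (μ * τ) * μ)) (Set.Ici 0) τ := by
    intro τ hτ
    have hlin : HasDerivAt (fun τ : ℝ => μ * τ) μ τ := by
      simpa using (hasDerivAt_id τ).const_mul μ
    have hexp : HasDerivAt (fun τ : ℝ => Real.exp (μ * τ)) (Real.exp (μ * τ) * μ) τ :=
      (Real.hasDerivAt_exp (μ * τ)).comp τ hlin
    exact (hIderiv τ hτ).mul hexp.hasDerivWithinAt
  have hJanti : AntitoneOn J (Set.Ici 0) := by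
    apply antitoneOn_of_deriv_nonpos (convex_Ici 0)
    · exact fun τ hτ => (hJderiv τ hτ).continuousWithinAt
    · intro τ hτ
      rw [interior_Ici] at hτ
      exact ((hJderiv τ (Set.Ioi_subset_Ici_self hτ)).hasDerivAt (Ici_mem_nhds hτ)).differentiableAt.differentiableWithinAt
    · intro τ hτ
      rw [interior_Ici] at hτ
      have hd := (hJderiv τ (Set.Ioi_subset_Ici_self hτ)).hasDerivAt (Ici_mem_nhds hτ)
      rw [hd.deriv]
      have hk := hkey τ (Set.Ioi_subset_Ici_self hτ)
      nlinarith [Real.exp_pos (μ * τ)]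
  intro t ht
  have hJt : J t ≤ J 0 := hJanti Set.self_mem_Ici ht ht
  have hJ0 : J 0 = I 0 := by simp [hJ]
  rw [hJ0] at hJt
  have hIt : I t * Real.exp (μ * t) ≤ I 0 := hJt
  have hgoal : I t ≤ I 0 * Real.exp (-μ * t) := by
    rw [neg_mul, Real.exp_neg, ← div_eq_mul_inv, le_div_iff₀ (Real.exp_pos (μ * t))]
    exact hIt
  exact hgoal
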